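/- Let u ≥ v be bounded functions on a Hilbert space H such that u and -v are semi-concave. Then there exists a function w : H → ℝ with u ≥ w ≥ v such that w is Fréchet differentiable with Lipschitz gradient (C^{1,1}). -/

import Mathlib

set_option maxHeartbeats 1000000

open Set Filter Metric Real
open scoped RealInnerProductSpace NNReal Topology

section Aux
variable {H : Type*} [NormedAddCommGroup H] [InnerProductSpace ℝ H] [CompleteSpace H]

private lemma aux_sq_ineq {t s α : ℝ} (hα : 0 < α) (ht : 0 ≤ t) (hs : 0 ≤ s) :
    t * s ≤ α * t ^ 2 + s ^ 2 / (4 * α) := by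
  have h4 : 0 < 4 * α := by linarith
  have expand : α * t ^ 2 + s ^ 2 / (4 * α) - t * s = (2 * α * t - s) ^ 2 / (4 * α) := by
    field_simp; ring
  have hnn := div_nonneg (sq_nonneg (2 * α * t - s)) h4.le
  linarith

private lemma exists_min_strong {F : H → ℝ} {c : ℝ} (hc : 0 < c)
    (hcont : Continuous F) (hbdd : BddBelow (range F))
    (hsc : ∀ p q : H, F ((1/2 : ℝ) • p + (1/2 : ℝ) • q) ≤ F p / 2 + F q / 2 - c * ‖p - q‖ ^ 2) :
    ∃ z : H, ∀ y, F z ≤ F y := by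
  haveI : Nonempty H := ⟨0⟩
  set m := ⨅ y, F y with hm
  have hmle : ∀ y, m ≤ F y := fun y => ciInf_le hbdd y
  have hseq : ∀ n : ℕ, ∃ p : H, F p < m + 1 / (n + 1) := by
    intro n
    apply exists_lt_of_ciInf_lt
    have h1 : (0:ℝ) < 1 / (n + 1) := by positivity
    rw [← hm]
    linarith
  choose φ hφ using hseq
  have key : ∀ n k : ℕ, ‖φ n - φ k‖ ^ 2 ≤ (1 / (n + 1) + 1 / (k + 1)) / (2 * c) := by
    intro n k
    have h1 := hsc (φ n) (φ k)
    have h2 := hmle ((1/2 : ℝ) • φ n + (1/2 : ℝ) • φ k)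
    have h3 := hφ n
    have h4 := hφ k
    have hc2 : (0:ℝ) < 2 * c := by linarith
    rw [le_div_iff₀ hc2]
    nlinarith
  have hcauchy : CauchySeq φ := by
    apply cauchySeq_of_le_tendsto_0 (fun N : ℕ => Real.sqrt (1 / ((N + 1) * c)))
    · intro n k N hn hk
      rw [dist_eq_norm, ← Real.sqrt_sq (norm_nonneg (φ n - φ k))]
      apply Real.sqrt_le_sqrt
      refine (key n k).trans ?_
      have e1 : (1:ℝ) / (n + 1) ≤ 1 / (N + 1) := by
        apply one_div_le_one_div_of_le (by positivity)
        have : (N:ℝ) ≤ n := Nat.cast_le.2 hn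
        linarith
      have e2 : (1:ℝ) / (k + 1) ≤ 1 / (N + 1) := by
        apply one_div_le_one_div_of_le (by positivity)
        have : (N:ℝ) ≤ k := Nat.cast_le.2 hk
        linarith
      have esum : (2:ℝ) / ((N:ℝ) + 1) = 1 / (N + 1) + 1 / (N + 1) := by ring
      have : (1 / ((n:ℝ) + 1) + 1 / (k + 1)) / (2 * c) ≤ (2 / ((N:ℝ)+1)) / (2 * c) := by
        apply div_le_div_of_nonneg_right ?_ (by positivity)
        · linarith
      refine this.trans (le_of_eq ?_)
      field_simp
    · have h0 : Tendsto (fun N : ℕ => 1 / (((N:ℝ) + 1) * c)) atTop (𝓝 0) := by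
        have := tendsto_one_div_add_atTop_nhds_zero_nat.mul_const (1 / c)
        simp only [zero_mul] at this
        convert this using 2 with N
        field_simp
      have := (Real.continuous_sqrt.tendsto 0).comp h0
      simpa [Function.comp_def] using this
  obtain ⟨z, hz⟩ := cauchySeq_tendsto_of_complete hcauchy
  refine ⟨z, fun y => ?_⟩
  have hFz : Tendsto (fun n => F (φ n)) atTop (𝓝 (F z)) := (hcont.tendsto z).comp hz
  have hFm : Tendsto (fun n : ℕ => m + 1 / ((n:ℝ) + 1)) atTop (𝓝 m) := by
    have h0 := (tendsto_const_nhds (x := m) (f := atTop (α := ℕ))).add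
      tendsto_one_div_add_atTop_nhds_zero_nat
    simpa using h0
  have : F z ≤ m := le_of_tendsto_of_tendsto' hFz hFm fun n => (hφ n).le
  exact this.trans (hmle y)

private lemma continuous_of_convexOn_bound {f : H → ℝ} (hf : ConvexOn ℝ univ f)
    {C0 C1 : ℝ} (hb : ∀ x, f x ≤ C0 + C1 * ‖x‖ ^ 2) : Continuous f := by
  haveI : Nonempty H := ⟨0⟩
  rw [← continuousOn_univ]
  refine ((hf.continuousOn_tfae isOpen_univ ⟨0, trivial⟩).out 3 1).1 ?_
  refine ⟨0, trivial, C0 + |C1|, ?_⟩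
  rw [Filter.eventually_map]
  filter_upwards [Metric.ball_mem_nhds (0:H) one_pos] with y hy
  have hny : ‖y‖ < 1 := by simpa [mem_ball, dist_zero_right] using hy
  have h2 : ‖y‖ ^ 2 ≤ 1 := by nlinarith [norm_nonneg y]
  have := hb y
  have hC1 : C1 * ‖y‖ ^ 2 ≤ |C1| := by
    calc C1 * ‖y‖ ^ 2 ≤ |C1| * ‖y‖ ^ 2 := by
          apply mul_le_mul_of_nonneg_right (le_abs_self C1) (by positivity)
      _ ≤ |C1| * 1 := by apply mul_le_mul_of_nonneg_left h2 (abs_nonneg C1)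
      _ = |C1| := mul_one _
  linarith

end Aux

theorem ilmanen_insertion {H : Type*} [NormedAddCommGroup H]
    [InnerProductSpace ℝ H] [CompleteSpace H]
    (u v : H → ℝ)
    (hu : ∃ C : ℝ, ∀ x, |u x| ≤ C) (hv : ∃ C : ℝ, ∀ x, |v x| ≤ C)
    (huv : ∀ x, v x ≤ u x)
    (hu_sc : ∃ k : ℝ, 0 < k ∧ ConcaveOn ℝ Set.univ (fun x : H => u x - ‖x‖ ^ 2 / k))
    (hv_sc : ∃ k : ℝ, 0 < k ∧ ConcaveOn ℝ Set.univ (fun x : H => (-v x) - ‖x‖ ^ 2 / k)) :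
    ∃ w : H → ℝ, (∀ x, v x ≤ w x ∧ w x ≤ u x) ∧
      Differentiable ℝ w ∧ ∃ K : NNReal, LipschitzWith K (fun x => gradient w x) := by
  haveI : Nonempty H := ⟨0⟩
  obtain ⟨C₁, hC₁⟩ := hu
  obtain ⟨C₂, hC₂⟩ := hv
  obtain ⟨k₁, hk₁, hu1⟩ := hu_sc
  obtain ⟨k₂, hk₂, hv1⟩ := hv_sc
  set C : ℝ := max C₁ C₂ with hCdef
  have hCu : ∀ x, |u x| ≤ C := fun x => (hC₁ x).trans (le_max_left _ _)
  have hCv : ∀ x, |v x| ≤ C := fun x => (hC₂ x).trans (le_max_right _ _)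
  have hC0 : 0 ≤ C := le_trans (abs_nonneg _) (hCu 0)
  set a : ℝ := max (1/k₁) (1/k₂) with hadef
  have ha : 0 < a := lt_max_of_lt_left (by positivity)
  have ha₁ : 1/k₁ ≤ a := le_max_left _ _
  have ha₂ : 1/k₂ ≤ a := le_max_right _ _
  -- convexity of the squared norm
  have hnormsq : ConvexOn ℝ (univ : Set H) (fun x : H => ‖x‖ ^ 2) := by
    refine ⟨convex_univ, ?_⟩
    intro x _ y _ s t hs ht hst
    simp only [smul_eq_mul]
    have h1 : ‖s • x + t • y‖ ≤ s * ‖x‖ + t * ‖y‖ := by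
      calc ‖s • x + t • y‖ ≤ ‖s • x‖ + ‖t • y‖ := norm_add_le _ _
        _ = s * ‖x‖ + t * ‖y‖ := by
            rw [norm_smul, norm_smul, Real.norm_eq_abs, abs_of_nonneg hs,
              Real.norm_eq_abs, abs_of_nonneg ht]
    have h2 : ‖s • x + t • y‖ ^ 2 ≤ (s * ‖x‖ + t * ‖y‖) ^ 2 := by
      nlinarith [norm_nonneg (s • x + t • y)]
    nlinarith [sq_nonneg (‖x‖ - ‖y‖), norm_nonneg x, norm_nonneg y, mul_nonneg hs ht]
  -- semiconcavity of u with constant a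
  have hU : ConcaveOn ℝ (univ : Set H) (fun x : H => u x - a * ‖x‖ ^ 2) := by
    have h2 : ConvexOn ℝ (univ : Set H) (fun x : H => (a - 1/k₁) • ‖x‖ ^ 2) :=
      hnormsq.smul (by linarith)
    have h3 := hu1.sub h2
    convert h3 using 1 <;> try rfl
    funext x
    simp only [Pi.sub_apply, smul_eq_mul]
    ring
  -- semiconvexity of v with constant a : V := v + a‖·‖² is convex
  have hV : ConvexOn ℝ (univ : Set H) (fun x : H => v x + a * ‖x‖ ^ 2) := by
    have h1 : ConvexOn ℝ (univ : Set H) (fun x : H => v x + ‖x‖ ^ 2 / k₂) := by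
      have := hv1.neg
      convert this using 1 <;> try rfl
      funext x
      simp only [Pi.neg_apply]
      ring
    have h2 : ConvexOn ℝ (univ : Set H) (fun x : H => (a - 1/k₂) • ‖x‖ ^ 2) :=
      hnormsq.smul (by linarith)
    have h3 := h1.add h2
    convert h3 using 1 <;> try rfl
    funext x
    simp only [Pi.add_apply, smul_eq_mul]
    ring
  set V : H → ℝ := fun x => v x + a * ‖x‖ ^ 2 with hVdef
  set hfun : H → ℝ := fun x => u x + a * ‖x‖ ^ 2 with hfundef
  have hVle : ∀ x, V x ≤ hfun x := fun x => by
    simp only [hVdef, hfundef]; linarith [huv x]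
  -- the Legendre transform of hfun
  set hstar : H → ℝ := fun p => ⨆ x : H, (⟪p, x⟫ - hfun x) with hstardef
  have hF1 : ∀ p x : H, ⟪p, x⟫ - hfun x ≤ C + ‖p‖ ^ 2 / (4 * a) := by
    intro p x
    have h1 : ⟪p, x⟫ ≤ ‖p‖ * ‖x‖ := real_inner_le_norm p x
    have h2 : ‖x‖ * ‖p‖ ≤ a * ‖x‖ ^ 2 + ‖p‖ ^ 2 / (4 * a) :=
      aux_sq_ineq ha (norm_nonneg x) (norm_nonneg p)
    have h3 : -u x ≤ C := by have := abs_le.1 (hCu x); linarith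
    simp only [hfundef]
    nlinarith [h1, h2, h3]
  have bddA : ∀ p : H, BddAbove (range fun x => ⟪p, x⟫ - hfun x) := by
    intro p
    refine ⟨C + ‖p‖ ^ 2 / (4 * a), ?_⟩
    rintro _ ⟨x, rfl⟩
    exact hF1 p x
  have hF3 : ∀ p x : H, ⟪p, x⟫ - hfun x ≤ hstar p := fun p x => le_ciSup (bddA p) x
  have hF2 : ∀ p : H, hstar p ≤ C + ‖p‖ ^ 2 / (4 * a) := fun p => ciSup_le (hF1 p)
  have hF4 : ∀ p : H, 3 * ‖p‖ ^ 2 / (16 * a) - C ≤ hstar p := by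
    intro p
    have h1 := hF3 p ((1 / (4 * a)) • p)
    have e1 : ⟪p, (1 / (4 * a)) • p⟫ = (1 / (4 * a)) * ‖p‖ ^ 2 := by
      rw [inner_smul_right, real_inner_self_eq_norm_sq]
    have e2 : ‖(1 / (4 * a)) • p‖ ^ 2 = (1 / (4 * a)) ^ 2 * ‖p‖ ^ 2 := by
      rw [norm_smul, Real.norm_eq_abs, abs_of_pos (by positivity), mul_pow]
    have h3 : u ((1 / (4 * a)) • p) ≤ C := by
      have := abs_le.1 (hCu ((1 / (4 * a)) • p)); linarith
    simp only [hfundef] at h1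
    rw [e1, e2] at h1
    have harith : (1 / (4 * a)) * ‖p‖ ^ 2 - a * ((1 / (4 * a)) ^ 2 * ‖p‖ ^ 2)
        = 3 * ‖p‖ ^ 2 / (16 * a) := by
      field_simp
      ring
    nlinarith [h1, h3]
  -- the biconjugate P
  set P : H → ℝ := fun x => ⨆ p : H, (⟪x, p⟫ - hstar p) with hPdef
  have hterm : ∀ x p : H, ⟪x, p⟫ - hstar p ≤ hfun x := by
    intro x p
    have := hF3 p x
    rw [real_inner_comm] at this
    linarith
  have bddP : ∀ x : H, BddAbove (range fun p => ⟪x, p⟫ - hstar p) := by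
    intro x
    exact ⟨hfun x, by rintro _ ⟨p, rfl⟩; exact hterm x p⟩
  have hPle : ∀ x, P x ≤ hfun x := fun x => ciSup_le (hterm x)
  have hPF : ∀ x p : H, ⟪x, p⟫ - hstar p ≤ P x := fun x p => le_ciSup (bddP x) p
  -- strong midpoint convexity of hstar
  have hF7 : ∀ p q : H, hstar ((1/2 : ℝ) • p + (1/2 : ℝ) • q)
      ≤ hstar p / 2 + hstar q / 2 - (1 / (32 * a)) * ‖p - q‖ ^ 2 := by
    intro p q
    apply ciSup_le
    intro x
    set b : ℝ := 1 / (8 * a) with hb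
    have hab : a * b = 1/8 := by rw [hb]; field_simp
    have hbpos : 0 < b := by rw [hb]; positivity
    set d : H := b • (p - q) with hd
    have hxm : x = (1/2 : ℝ) • (x + d) + (1/2 : ℝ) • (x - d) := by module
    have hconc := hU.2 (mem_univ (x + d)) (mem_univ (x - d))
      (by norm_num : (0:ℝ) ≤ 1/2) (by norm_num : (0:ℝ) ≤ 1/2) (by norm_num)
    rw [← hxm] at hconc
    simp only [smul_eq_mul] at hconc
    have h1 := hF3 p (x + d)
    have h2 := hF3 q (x - d)
    have e1 : ⟪(1/2 : ℝ) • p + (1/2 : ℝ) • q, x⟫ = (1/2) * ⟪p, x⟫ + (1/2) * ⟪q, x⟫ := by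
      rw [inner_add_left, real_inner_smul_left, real_inner_smul_left]
    have e2 : ⟪p, x + d⟫ = ⟪p, x⟫ + ⟪p, d⟫ := inner_add_right p x d
    have e3 : ⟪q, x - d⟫ = ⟪q, x⟫ - ⟪q, d⟫ := inner_sub_right q x d
    have e4 : ⟪p, d⟫ - ⟪q, d⟫ = b * ‖p - q‖ ^ 2 := by
      rw [hd, inner_smul_right, inner_smul_right, ← mul_sub, ← inner_sub_left,
        real_inner_self_eq_norm_sq]
    have e7 : ‖d‖ ^ 2 = b ^ 2 * ‖p - q‖ ^ 2 := by
      rw [hd, norm_smul, Real.norm_eq_abs, abs_of_pos hbpos, mul_pow]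
    have En1 : a * ‖x + d‖ ^ 2 = a * ‖x‖ ^ 2 + 2 * (a * ⟪x, d⟫) + (1/8) * (b * ‖p - q‖ ^ 2) := by
      rw [norm_add_sq_real x d, e7]
      linear_combination ‖p - q‖ ^ 2 * b * hab
    have En2 : a * ‖x - d‖ ^ 2 = a * ‖x‖ ^ 2 - 2 * (a * ⟪x, d⟫) + (1/8) * (b * ‖p - q‖ ^ 2) := by
      rw [norm_sub_sq_real x d, e7]
      linear_combination ‖p - q‖ ^ 2 * b * hab
    have eg : 1 / (32 * a) * ‖p - q‖ ^ 2 = (1/4) * (b * ‖p - q‖ ^ 2) := by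
      rw [hb]; ring
    simp only [hfundef] at h1 h2 ⊢
    rw [e1, eg]
    rw [e2] at h1
    rw [e3] at h2
    linarith [h1, h2, hconc, En1, En2, e4]
  -- convexity and continuity of hstar
  have hstarconv : ConvexOn ℝ (univ : Set H) hstar := by
    refine ⟨convex_univ, ?_⟩
    intro p _ q _ s t hs ht hst
    apply ciSup_le
    intro x
    have h1 := hF3 p x
    have h2 := hF3 q x
    have e1 : ⟪s • p + t • q, x⟫ = s * ⟪p, x⟫ + t * ⟪q, x⟫ := by
      rw [inner_add_left, real_inner_smul_left, real_inner_smul_left]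
    simp only [smul_eq_mul]
    rw [e1]
    have hsum : s * hfun x + t * hfun x = hfun x := by
      calc s * hfun x + t * hfun x = (s + t) * hfun x := by ring
        _ = hfun x := by rw [hst, one_mul]
    linarith [mul_le_mul_of_nonneg_left h1 hs, mul_le_mul_of_nonneg_left h2 ht, hsum]
  have hstarcont : Continuous hstar := by
    apply continuous_of_convexOn_bound hstarconv (C0 := C) (C1 := 1/(4*a))
    intro p
    have := hF2 p
    have e : ‖p‖^2/(4*a) = 1/(4*a)*‖p‖^2 := by ring
    linarith [this, e.le]
  -- midpoint semiconcavity of P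
  have hF8 : ∀ x e : H, P (x + e) + P (x - e) ≤ 2 * P x + 4 * a * ‖e‖ ^ 2 := by
    intro x e
    have key : ∀ p₁ p₂ : H, (⟪x + e, p₁⟫ - hstar p₁) + (⟪x - e, p₂⟫ - hstar p₂)
        ≤ 2 * P x + 4 * a * ‖e‖ ^ 2 := by
      intro p₁ p₂
      have hm := hF7 p₁ p₂
      have hP := hPF x ((1/2 : ℝ) • p₁ + (1/2 : ℝ) • p₂)
      have e1 : ⟪x, (1/2 : ℝ) • p₁ + (1/2 : ℝ) • p₂⟫ = (1/2) * ⟪x, p₁⟫ + (1/2) * ⟪x, p₂⟫ := by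
        rw [inner_add_right, inner_smul_right, inner_smul_right]
      rw [e1] at hP
      have e2 : ⟪x + e, p₁⟫ = ⟪x, p₁⟫ + ⟪e, p₁⟫ := inner_add_left x e p₁
      have e3 : ⟪x - e, p₂⟫ = ⟪x, p₂⟫ - ⟪e, p₂⟫ := inner_sub_left x e p₂
      have e4 : ⟪e, p₁⟫ - ⟪e, p₂⟫ = ⟪e, p₁ - p₂⟫ := (inner_sub_right e p₁ p₂).symm
      have e5 : ⟪e, p₁ - p₂⟫ ≤ ‖e‖ * ‖p₁ - p₂‖ := real_inner_le_norm e (p₁ - p₂)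
      have e6 : ‖p₁ - p₂‖ * ‖e‖ ≤ (1/(16*a)) * ‖p₁ - p₂‖^2 + ‖e‖^2/(4*(1/(16*a))) :=
        aux_sq_ineq (by positivity) (norm_nonneg _) (norm_nonneg e)
      have e8 : ‖e‖^2/(4*(1/(16*a))) = 4*a*‖e‖^2 := by field_simp; ring
      have e9 : (1/(16*a)) * ‖p₁-p₂‖^2 = 2 * (1/(32*a) * ‖p₁-p₂‖^2) := by ring
      rw [e2, e3]
      have hsum : ⟪x, p₁⟫ + ⟪x, p₂⟫ - hstar p₁ - hstar p₂
          ≤ 2 * P x - 2 * (1/(32*a) * ‖p₁-p₂‖^2) := by linarith [hm, hP]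
      have hinner : ⟪e, p₁⟫ - ⟪e, p₂⟫ ≤ (1/(16*a))*‖p₁-p₂‖^2 + 4*a*‖e‖^2 := by
        rw [e4]
        calc ⟪e, p₁ - p₂⟫ ≤ ‖e‖ * ‖p₁ - p₂‖ := e5
          _ = ‖p₁ - p₂‖ * ‖e‖ := mul_comm _ _
          _ ≤ (1/(16*a)) * ‖p₁ - p₂‖^2 + ‖e‖^2/(4*(1/(16*a))) := e6
          _ = (1/(16*a)) * ‖p₁ - p₂‖^2 + 4*a*‖e‖^2 := by rw [e8]
      linarith [hsum, hinner, e9]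
    have h1 : P (x + e) ≤ 2 * P x + 4 * a * ‖e‖ ^ 2 - P (x - e) := by
      apply ciSup_le
      intro p₁
      have h2 : P (x - e) ≤ 2 * P x + 4 * a * ‖e‖ ^ 2 - (⟪x + e, p₁⟫ - hstar p₁) := by
        apply ciSup_le
        intro p₂
        linarith [key p₁ p₂]
      linarith
    linarith
  -- existence of maximizers in the definition of P
  have hargmin : ∀ x : H, ∃ p : H, ∀ r : H, hstar p - ⟪x, p⟫ ≤ hstar r - ⟪x, r⟫ := by
    intro x
    apply exists_min_strong (c := 1/(32*a)) (by positivity)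
    · exact hstarcont.sub (continuous_const.inner continuous_id)
    · refine ⟨-C - (4*a/3) * ‖x‖^2, ?_⟩
      rintro _ ⟨p, rfl⟩
      have h1 := hF4 p
      have h2 : ⟪x, p⟫ ≤ ‖x‖ * ‖p‖ := real_inner_le_norm x p
      have h3 : ‖p‖ * ‖x‖ ≤ (3/(16*a)) * ‖p‖^2 + ‖x‖^2/(4*(3/(16*a))) :=
        aux_sq_ineq (by positivity) (norm_nonneg _) (norm_nonneg _)
      have h4 : ‖x‖^2/(4*(3/(16*a))) = (4*a/3) * ‖x‖^2 := by field_simp; ring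
      have h5 : (3/(16*a)) * ‖p‖^2 = 3 * ‖p‖^2/(16*a) := by ring
      nlinarith [mul_comm ‖x‖ ‖p‖]
    · intro p q
      have := hF7 p q
      have e1 : ⟪x, (1/2 : ℝ) • p + (1/2 : ℝ) • q⟫ = (1/2) * ⟪x, p⟫ + (1/2) * ⟪x, q⟫ := by
        rw [inner_add_right, inner_smul_right, inner_smul_right]
      rw [e1]
      linarith
  choose pf hpf using hargmin
  -- P is attained at pf x
  have hF9 : ∀ x : H, P x = ⟪x, pf x⟫ - hstar (pf x) := by
    intro x
    refine le_antisymm (ciSup_le fun p => by linarith [hpf x p]) (hPF x (pf x))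
  -- subgradient inequality
  have hF10 : ∀ x y : H, P x + ⟪pf x, y - x⟫ ≤ P y := by
    intro x y
    have h := hPF y (pf x)
    have e1 : ⟪y, pf x⟫ = ⟪x, pf x⟫ + ⟪y - x, pf x⟫ := by
      rw [← inner_add_left]
      congr 1
      abel
    rw [e1] at h
    rw [hF9 x, real_inner_comm (y - x) (pf x)]
    linarith
  -- upper quadratic bound
  have hF11 : ∀ x y : H, P y ≤ P x + ⟪pf x, y - x⟫ + 4 * a * ‖y - x‖ ^ 2 := by
    intro x y
    have h8 := hF8 x (y - x)
    have ey : x + (y - x) = y := by abel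
    rw [ey] at h8
    have h10 := hF10 x (x - (y - x))
    have e1 : x - (y - x) - x = -(y - x) := by abel
    rw [e1, inner_neg_right] at h10
    linarith
  -- Lipschitz bound on pf
  have hF12 : ∀ x y : H, ‖pf x - pf y‖ ≤ 8 * a * ‖x - y‖ := by
    intro x y
    set Δ : H := pf x - pf y with hΔ
    set z : H := x - (1/(8*a)) • Δ with hz
    have h1 := hF10 y z
    have h2 := hF11 x z
    have h3 := hF11 y x
    have ez1 : z - x = -((1/(8*a)) • Δ) := by rw [hz]; abel
    have ez2 : z - y = (x - y) - (1/(8*a)) • Δ := by rw [hz]; abel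
    have ei1 : ⟪pf x, z - x⟫ = -((1/(8*a)) * ⟪pf x, Δ⟫) := by
      rw [ez1, inner_neg_right, inner_smul_right]
    have ei2 : ⟪pf y, z - y⟫ = ⟪pf y, x - y⟫ - (1/(8*a)) * ⟪pf y, Δ⟫ := by
      rw [ez2, inner_sub_right, inner_smul_right]
    have ei3 : ⟪pf x, Δ⟫ - ⟪pf y, Δ⟫ = ‖Δ‖^2 := by
      rw [← inner_sub_left, ← hΔ, real_inner_self_eq_norm_sq]
    have en1 : ‖z - x‖^2 = (1/(8*a))^2 * ‖Δ‖^2 := by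
      rw [ez1, norm_neg, norm_smul, Real.norm_eq_abs, abs_of_pos (by positivity), mul_pow]
    have key : (1/(8*a)) * ‖Δ‖^2 ≤ 4*a*‖x-y‖^2 + 4*a*((1/(8*a))^2 * ‖Δ‖^2) := by
      rw [ei1] at h2
      rw [ei2] at h1
      rw [en1] at h2
      have ei3' : (1/(8*a))*⟪pf x, Δ⟫ - (1/(8*a))*⟪pf y, Δ⟫ = (1/(8*a))*‖Δ‖^2 := by
        rw [← mul_sub, ei3]
      linarith [h1, h2, h3, ei3']
    have key2 : ‖Δ‖^2 ≤ (8*a*‖x-y‖)^2 := by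
      have e1 : 4*a*((1/(8*a))^2 * ‖Δ‖^2) = (1/(16*a)) * ‖Δ‖^2 := by field_simp; ring
      have e2 : (1/(8*a)) * ‖Δ‖^2 - (1/(16*a)) * ‖Δ‖^2 = (1/(16*a)) * ‖Δ‖^2 := by
        field_simp; ring
      have h16 : (1/(16*a)) * ‖Δ‖^2 ≤ 4*a*‖x-y‖^2 := by linarith [key, e1.le, e2.le]
      have : ‖Δ‖^2 ≤ 64*a^2*‖x-y‖^2 := by
        have h16' := mul_le_mul_of_nonneg_left h16 (by positivity : (0:ℝ) ≤ 16*a)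
        have e3 : 16*a*((1/(16*a)) * ‖Δ‖^2) = ‖Δ‖^2 := by field_simp
        nlinarith [h16']
      nlinarith [this]
    have h0 : 0 ≤ 8*a*‖x-y‖ := by positivity
    nlinarith [key2, norm_nonneg Δ, h0]
  -- the function w and its gradient
  set w : H → ℝ := fun x => P x - a * ‖x‖^2 with hwdef
  set g : H → H := fun x => pf x - (2*a) • x with hgdef
  have hquad : ∀ x y : H, |w y - w x - ⟪g x, y - x⟫| ≤ 4*a*‖y - x‖^2 := by
    intro x y
    have h10 := hF10 x y
    have h11 := hF11 x y
    have e1 : ⟪g x, y - x⟫ = ⟪pf x, y - x⟫ - (2*a) * ⟪x, y - x⟫ := by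
      rw [hgdef]
      simp only []
      rw [inner_sub_left, real_inner_smul_left]
    have e2 : ‖y - x‖^2 = ‖y‖^2 - 2*⟪x,y⟫ + ‖x‖^2 := by
      rw [norm_sub_sq_real, real_inner_comm]
    have e3 : ⟪x, y - x⟫ = ⟪x, y⟫ - ‖x‖^2 := by
      rw [inner_sub_right, real_inner_self_eq_norm_sq]
    rw [abs_le]
    constructor
    · simp only [hwdef]
      rw [e1, e3]
      nlinarith [h10, e2, sq_nonneg (‖y - x‖)]
    · simp only [hwdef]
      rw [e1, e3]
      nlinarith [h11, e2, sq_nonneg (‖y - x‖)]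
  have hGrad : ∀ x : H, HasGradientAt w (g x) x := by
    intro x
    rw [hasGradientAt_iff_isLittleO, Asymptotics.isLittleO_iff]
    intro c hc
    have hrad : (0:ℝ) < c/(4*a) := by positivity
    filter_upwards [Metric.ball_mem_nhds x hrad] with y hy
    have hdist : ‖y - x‖ < c/(4*a) := by
      rw [mem_ball, dist_eq_norm] at hy
      exact hy
    have h1 := hquad x y
    have h2 : 4*a*‖y-x‖^2 ≤ c*‖y-x‖ := by
      have hmul := mul_le_mul_of_nonneg_left hdist.le
        (by positivity : (0:ℝ) ≤ 4*a*‖y-x‖)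
      have e3 : 4*a*‖y-x‖*(c/(4*a)) = c*‖y-x‖ := by field_simp
      nlinarith [hmul, e3]
    rw [Real.norm_eq_abs]
    calc |w y - w x - ⟪g x, y - x⟫| ≤ 4*a*‖y-x‖^2 := h1
      _ ≤ c*‖y-x‖ := h2
      _ = c*‖y-x‖ := rfl
  -- lower bound : v ≤ w
  have hvP : ∀ x₀ : H, V x₀ ≤ P x₀ := by
    intro x₀
    have hVcont : Continuous V := by
      apply continuous_of_convexOn_bound hV (C0 := C) (C1 := a)
      intro x
      have := (abs_le.1 (hCv x)).2
      simp only [hVdef]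
      nlinarith [this]
    have hVlb : ∀ y : H, -C ≤ V y := by
      intro y
      have := (abs_le.1 (hCv y)).1
      simp only [hVdef]
      nlinarith [sq_nonneg (‖y‖), ha.le]
    refine le_of_forall_pos_le_add ?_
    intro ε hε
    obtain ⟨δ, hδ, hcont⟩ := Metric.continuousAt_iff.1 (hVcont.continuousAt (x := x₀)) ε hε
    have hnum : 0 < V x₀ + C + 1 := by linarith [hVlb x₀]
    set τ : ℝ := (V x₀ + C + 1)/δ^2 with hτ
    clear_value τ
    have hτpos : 0 < τ := by rw [hτ]; exact div_pos hnum (by positivity)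
    obtain ⟨z, hz⟩ : ∃ z : H, ∀ y : H, V z + τ*‖z - x₀‖^2 ≤ V y + τ*‖y - x₀‖^2 := by
      apply exists_min_strong (c := τ/4) (by positivity)
      · exact hVcont.add (continuous_const.mul
          (((continuous_id.sub continuous_const).norm).pow 2))
      · refine ⟨-C, ?_⟩
        rintro _ ⟨y, rfl⟩
        have := hVlb y
        show -C ≤ V y + τ*‖y - x₀‖^2
        nlinarith [mul_nonneg hτpos.le (sq_nonneg (‖y - x₀‖))]
      · intro p q
        have hVc := hV.2 (mem_univ p) (mem_univ q)
          (by norm_num : (0:ℝ) ≤ 1/2) (by norm_num : (0:ℝ) ≤ 1/2) (by norm_num)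
        simp only [smul_eq_mul] at hVc
        have hA : (1/2 : ℝ) • p + (1/2 : ℝ) • q - x₀
            = (1/2 : ℝ) • ((p - x₀) + (q - x₀)) := by module
        have hnorm : ‖(1/2 : ℝ) • p + (1/2 : ℝ) • q - x₀‖^2
            = (‖p - x₀‖^2 + ‖q - x₀‖^2)/2 - ‖p - q‖^2/4 := by
          rw [hA, norm_smul, Real.norm_eq_abs, mul_pow]
          have h1 : ‖(p - x₀) + (q - x₀)‖^2
              = ‖p-x₀‖^2 + 2*⟪p-x₀, q-x₀⟫ + ‖q-x₀‖^2 := norm_add_sq_real _ _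
          have h2 : ‖p - q‖^2 = ‖p-x₀‖^2 - 2*⟪p-x₀, q-x₀⟫ + ‖q-x₀‖^2 := by
            have e : p - q = (p - x₀) - (q - x₀) := by abel
            rw [e, norm_sub_sq_real]
          rw [h1]
          rw [h2]
          norm_num
          ring
        rw [hnorm]
        have hexp : τ*((‖p - x₀‖^2 + ‖q - x₀‖^2)/2 - ‖p - q‖^2/4)
            = (τ*‖p - x₀‖^2)/2 + (τ*‖q - x₀‖^2)/2 - (τ/4)*‖p - q‖^2 := by ring
        linarith [hVc, hexp.le, hexp.ge]
    set p₀ : H := (2*τ) • (x₀ - z) with hp₀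
    clear_value p₀
    -- subgradient inequality for V at z
    have hsg : ∀ y : H, V z + ⟪p₀, y - z⟫ ≤ V y := by
      intro y
      have hkey : ∀ s : ℝ, 0 < s → s ≤ 1 →
          ⟪p₀, y - z⟫ ≤ V y - V z + s*(τ*‖y - z‖^2) := by
        intro s hs hs1
        have hmin := hz (z + s • (y - z))
        have hpt : z + s • (y - z) = (1 - s) • z + s • y := by module
        have hVc := hV.2 (mem_univ z) (mem_univ y)
          (by linarith : (0:ℝ) ≤ 1 - s) hs.le (by ring)
        rw [← hpt] at hVc
        simp only [smul_eq_mul] at hVc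
        have hnorm : ‖z + s • (y - z) - x₀‖^2
            = ‖z - x₀‖^2 + 2*s*⟪z - x₀, y - z⟫ + s^2*‖y - z‖^2 := by
          have e : z + s • (y - z) - x₀ = (z - x₀) + s • (y - z) := by abel
          rw [e, norm_add_sq_real, inner_smul_right, norm_smul, Real.norm_eq_abs,
            abs_of_pos hs, mul_pow]
          ring
        rw [hnorm] at hmin
        have hinner : ⟪p₀, y - z⟫ = -(2*(τ*⟪z - x₀, y - z⟫)) := by
          rw [hp₀, inner_smul_left]
          have e : x₀ - z = -(z - x₀) := by abel
          rw [e, inner_neg_left]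
          simp
          ring
        have hexp : τ*(‖z - x₀‖^2 + 2*s*⟪z - x₀, y - z⟫ + s^2*‖y - z‖^2)
            = τ*‖z - x₀‖^2 + 2*s*(τ*⟪z - x₀, y - z⟫) + s^2*(τ*‖y - z‖^2) := by ring
        rw [hexp] at hmin
        have hstep : 0 ≤ s*(V y - V z) + 2*s*(τ*⟪z - x₀, y - z⟫)
            + s^2*(τ*‖y - z‖^2) := by nlinarith [hmin, hVc]
        rw [hinner]
        have hdiv : 0 ≤ (V y - V z) + 2*(τ*⟪z - x₀, y - z⟫) + s*(τ*‖y - z‖^2) := by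
          have e : s*((V y - V z) + 2*(τ*⟪z - x₀, y - z⟫) + s*(τ*‖y - z‖^2))
              = s*(V y - V z) + 2*s*(τ*⟪z - x₀, y - z⟫) + s^2*(τ*‖y - z‖^2) := by ring
          nlinarith [hstep, e, hs]
        linarith
      by_contra hlt
      push_neg at hlt
      set gap : ℝ := V z + ⟪p₀, y - z⟫ - V y with hgap
      have hgap0 : 0 < gap := by simp only [hgap]; linarith
      set c₀ : ℝ := τ*‖y - z‖^2 with hc₀
      have hc₀0 : 0 ≤ c₀ := mul_nonneg hτpos.le (sq_nonneg _)
      set s : ℝ := min 1 (gap/(2*c₀ + 1)) with hs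
      have hspos : 0 < s := by
        apply lt_min one_pos
        positivity
      have hs1 : s ≤ 1 := min_le_left _ _
      have hkey' := hkey s hspos hs1
      have hsb : s*c₀ < gap := by
        have h1 : s ≤ gap/(2*c₀ + 1) := min_le_right _ _
        have h2 : s*c₀ ≤ (gap/(2*c₀ + 1))*c₀ := mul_le_mul_of_nonneg_right h1 hc₀0
        have h3 : (gap/(2*c₀ + 1))*c₀ < gap := by
          rw [div_mul_eq_mul_div, div_lt_iff₀ (by positivity)]
          nlinarith [hgap0, hc₀0]
        linarith
      linarith [hkey', hsb]
    -- conclude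
    have hstarb : hstar p₀ ≤ ⟪p₀, z⟫ - V z := by
      apply ciSup_le
      intro x
      have h1 := hsg x
      have h2 := hVle x
      have e : ⟪p₀, x - z⟫ = ⟪p₀, x⟫ - ⟪p₀, z⟫ := inner_sub_right p₀ x z
      rw [e] at h1
      linarith
    have hfin := hPF x₀ p₀
    have e1 : ⟪x₀, p₀⟫ - ⟪p₀, z⟫ = ⟪p₀, x₀ - z⟫ := by
      rw [inner_sub_right, real_inner_comm x₀ p₀]
    have e2 : ⟪p₀, x₀ - z⟫ = 2*(τ*‖x₀ - z‖^2) := by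
      rw [hp₀, inner_smul_left]
      simp only [RCLike.star_def, conj_trivial]
      rw [real_inner_self_eq_norm_sq]
      ring
    have hPz : V z ≤ P x₀ := by
      nlinarith [hfin, hstarb, e1, e2, mul_nonneg hτpos.le (sq_nonneg (‖x₀ - z‖))]
    -- the minimizer is close to x₀
    have hminx := hz x₀
    have e3 : ‖x₀ - x₀‖^2 = 0 := by simp
    have hd2 : τ*‖z - x₀‖^2 ≤ V x₀ + C := by
      have := hVlb z
      nlinarith [hminx, e3]
    have hdlt : dist z x₀ < δ := by
      rw [dist_eq_norm]
      have hδ' : δ ≠ 0 := ne_of_gt hδ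
      have hτδ : τ*δ^2 = V x₀ + C + 1 := by
        rw [hτ]
        field_simp
      have hineq : τ*‖z - x₀‖^2 < τ*δ^2 := by linarith [hd2, hτδ]
      have hzd : ‖z - x₀‖^2 < δ^2 := lt_of_mul_lt_mul_left hineq hτpos.le
      exact lt_of_pow_lt_pow_left₀ 2 hδ.le hzd
    have hVnear := hcont hdlt
    rw [Real.dist_eq, abs_lt] at hVnear
    linarith [hPz, hVnear.1, hVnear.2]
  -- final assembly
  refine ⟨w, ?_, ?_, ?_⟩
  · intro x
    constructor
    · have h1 := hvP x
      simp only [hVdef] at h1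
      simp only [hwdef]
      linarith
    · have h1 := hPle x
      simp only [hfundef] at h1
      simp only [hwdef]
      linarith
  · exact fun x => (hGrad x).differentiableAt
  · refine ⟨Real.toNNReal (10*a), ?_⟩
    apply LipschitzWith.of_dist_le_mul
    intro x y
    have hcoe : (Real.toNNReal (10*a) : ℝ) = 10*a := Real.coe_toNNReal _ (by positivity)
    rw [hcoe]
    have hgx : gradient w x = g x := (hGrad x).gradient
    have hgy : gradient w y = g y := (hGrad y).gradient
    rw [hgx, hgy, dist_eq_norm, dist_eq_norm]
    have e1 : g x - g y = (pf x - pf y) - (2*a) • (x - y) := by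
      simp only [hgdef]
      module
    rw [e1]
    calc ‖(pf x - pf y) - (2*a) • (x - y)‖ ≤ ‖pf x - pf y‖ + ‖(2*a) • (x - y)‖ :=
          norm_sub_le _ _
      _ ≤ 8*a*‖x - y‖ + 2*a*‖x - y‖ := by
          have := hF12 x y
          have e2 : ‖(2*a) • (x - y)‖ = 2*a*‖x-y‖ := by
            rw [norm_smul, Real.norm_eq_abs, abs_of_pos (by positivity)]
          linarith
      _ = 10*a*‖x-y‖ := by ring
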